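/- In every image-finite labelled transition system, bisimilarity coincides with the intersection of all finite approximants: ∼ = ∩_{k∈ℕ} ∼_k; that is, two states s, t satisfy s ∼ t if and only if s ∼_k t for every k ∈ ℕ. -/
import Mathlib


namespace LTS

variable {Act S : Type*}

/-- `R` is a (strong) bisimulation for the transition relation `tr` -/
def IsBisim (tr : Act → S → S → Prop) (R : S → S → Prop) : Prop :=
  ∀ s t, R s t →
    (∀ a s', tr a s s' → ∃ t', tr a t t' ∧ R s' t') ∧
    (∀ a t', tr a t t' → ∃ s', tr a s s' ∧ R s' t')

/-- bisimilarity: the largest bisimulation (the union of all bisimulations) -/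
def Bisim (tr : Act → S → S → Prop) (s t : S) : Prop := ∃ R, IsBisim tr R ∧ R s t

/-- the approximants `∼_k`: `∼_0` relates everything, and `s ∼_{k+1} t` iff each
transition of one side can be matched by the other side into `∼_k` -/
def approx (tr : Act → S → S → Prop) : ℕ → S → S → Prop
  | 0 => fun _ _ => True
  | k + 1 => fun s t => approx tr k s t ∧
      (∀ a s', tr a s s' → ∃ t', tr a t t' ∧ approx tr k s' t') ∧
      (∀ a t', tr a t t' → ∃ s', tr a s s' ∧ approx tr k s' t')

theorem approx_mono {tr : Act → S → S → Prop} {j k : ℕ} (h : k ≤ j) {s t : S}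
    (ha : approx tr j s t) : approx tr k s t := by
  induction j with
  | zero => simpa [Nat.le_zero.mp h] using ha
  | succ j ih =>
    rcases Nat.lt_or_ge k (j+1) with hlt | hge
    · exact ih (Nat.lt_succ_iff.mp hlt) ha.1
    · have : k = j + 1 := le_antisymm h hge
      exact this ▸ ha

/-- key pigeonhole step: if for every `k` some element of a finite set satisfies an
antitone property `Q k`, then one element satisfies `Q k` for all `k`. -/
theorem exists_forall_of_finite {P : S → Prop} (hfin : {x | P x}.Finite)
    (Q : ℕ → S → Prop) (hmono : ∀ {j k x}, k ≤ j → Q j x → Q k x)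
    (h : ∀ k, ∃ x, P x ∧ Q k x) : ∃ x, P x ∧ ∀ k, Q k x := by
  by_contra hcon
  push_neg at hcon
  have hfail : ∀ x, P x → ∃ k, ¬ Q k x := hcon
  choose g hg using fun (x : hfin.toFinset) => hfail x (hfin.mem_toFinset.mp x.2)
  obtain ⟨N, hN⟩ : ∃ N, ∀ x : hfin.toFinset, g x ≤ N :=
    ⟨hfin.toFinset.attach.sup g, fun x => Finset.le_sup (Finset.mem_attach _ _)⟩
  obtain ⟨x, hx, hQ⟩ := h N
  exact hg ⟨x, hfin.mem_toFinset.mpr hx⟩ (hmono (hN _) hQ)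

end LTS

open LTS in
/-- In every image-finite labelled transition system, bisimilarity
coincides with the intersection of all finite approximants:
`s ∼ t` iff `s ∼_k t` for every `k ∈ ℕ`. -/
theorem bisim_iff_forall_approx {Act S : Type*} (tr : Act → S → S → Prop)
    (himg : ∀ s a, {s' | tr a s s'}.Finite) (s t : S) :
    Bisim tr s t ↔ ∀ k, approx tr k s t := by
  constructor
  · rintro ⟨R, hR, hst⟩ k
    induction k generalizing s t with
    | zero => trivial
    | succ k ih =>
      refine ⟨ih s t hst, ?_, ?_⟩
      · intro a s' hs'
        obtain ⟨t', ht', hR'⟩ := (hR s t hst).1 a s' hs'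
        exact ⟨t', ht', ih s' t' hR'⟩
      · intro a t' ht'
        obtain ⟨s', hs', hR'⟩ := (hR s t hst).2 a t' ht'
        exact ⟨s', hs', ih s' t' hR'⟩
  · intro h
    refine ⟨fun s t => ∀ k, approx tr k s t, ?_, h⟩
    intro s t hst
    constructor
    · intro a s' hs'
      exact exists_forall_of_finite (himg t a) (fun k t' => approx tr k s' t')
        (fun h1 h2 => approx_mono h1 h2) (fun k => (hst (k+1)).2.1 a s' hs')
    · intro a t' ht'
      exact exists_forall_of_finite (himg s a) (fun k s' => approx tr k s' t')
        (fun h1 h2 => approx_mono h1 h2) (fun k => (hst (k+1)).2.2 a t' ht')
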